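/- arXiv:1204.3025 — 2 statements merged into one kernel-verified Lean document; each statement's English description precedes it below -/
import Mathlib

section
/- Let R be an integral domain and (M_r)_{r∈ℕ} a family of finite free R-modules. Let S be a subring of the product ring ∏_r End_R(M_r) which, for every r and every pair of basis indices (α, β) of M_r, contains an element whose r-th component is a nonzero scalar multiple of the elementary endomorphism E_{αβ} (and arbitrary elsewhere). Then every element of the centre of S acts on each M_r as multiplication by a scalar λ_r ∈ R. -/
/-- Let `R` be an integral domain and `(M r)` a family of finite free
`R`-modules with bases `b r`.  If a subring `S` of `∏ r, End_R (M r)` contains,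
for every `r` and all basis indices `α β`, an element whose `r`-th component is
a nonzero scalar multiple of the elementary endomorphism `E_{αβ}`, then every
element of the centre of `S` acts on each `M r` as multiplication by a scalar. -/
theorem center_acts_by_scalars (R : Type*) [CommRing R] [IsDomain R]
    (M : ℕ → Type*) [∀ r, AddCommGroup (M r)] [∀ r, Module R (M r)]
    (ι : ℕ → Type*) [∀ r, Fintype (ι r)] (b : ∀ r, Module.Basis (ι r) R (M r))
    (S : Subring (∀ r, Module.End R (M r)))
    (hS : ∀ (r : ℕ) (α β : ι r), ∃ s ∈ S, ∃ c : R, c ≠ 0 ∧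
      s r (b r β) = c • b r α ∧ ∀ γ : ι r, γ ≠ β → s r (b r γ) = 0)
    (z : ∀ r, Module.End R (M r)) (hz : z ∈ S)
    (hcentral : ∀ s ∈ S, z * s = s * z) :
    ∀ r : ℕ, ∃ lam : R, ∀ x : M r, z r x = lam • x := by
  intro r
  haveI : Module.IsTorsionFree R (M r) := (b r).isTorsionFree
  have key : ∀ α β : ι r, z r (b r α) = ((b r).repr (z r (b r β)) β) • b r α := by
    intro α β
    obtain ⟨s, hsS, c, hc, hβ, hγ⟩ := hS r α β
    have h1 : z r (s r (b r β)) = s r (z r (b r β)) := by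
      have h := congrFun (hcentral s hsS) r
      simpa [Module.End.mul_apply] using LinearMap.congr_fun h (b r β)
    rw [hβ, map_smul] at h1
    have h2 : s r (z r (b r β)) = ((b r).repr (z r (b r β)) β) • (c • b r α) := by
      conv_lhs => rw [← (b r).sum_repr (z r (b r β))]
      rw [map_sum, Finset.sum_eq_single β]
      · rw [map_smul, hβ]
      · intro γ _ hne; rw [map_smul, hγ γ hne, smul_zero]
      · intro h; exact absurd (Finset.mem_univ β) h
    rw [h2] at h1
    exact smul_right_injective (M r) hc (h1.trans (smul_comm _ _ _))
  by_cases hne : Nonempty (ι r)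
  · obtain ⟨β⟩ := hne
    set lam := (b r).repr (z r (b r β)) β with hlam
    refine ⟨lam, fun x => ?_⟩
    have h3 : z r x = ∑ γ, (b r).repr x γ • (lam • b r γ) := by
      conv_lhs => rw [← (b r).sum_repr x]
      rw [map_sum]
      exact Finset.sum_congr rfl fun γ _ => by rw [map_smul, key γ β]
    rw [h3]
    simp_rw [smul_comm _ lam]
    rw [← Finset.smul_sum, (b r).sum_repr]
  · haveI : IsEmpty (ι r) := not_nonempty_iff.mp hne
    haveI : Subsingleton (M r) := (b r).repr.toEquiv.subsingleton
    exact ⟨0, fun x => Subsingleton.elim _ _⟩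
end

section
/- Let p be a prime and let A = ℤ_(p)[v₁, v₂, ...] and P = A[t₁, t₂, ...] be polynomial rings, graded with |v_i| = |t_i| = 2(p^i − 1). Let η : A → P be a graded ring homomorphism such that for each m, η(v_m) = p·t_m + Σ_γ λ_γ t^γ + (terms in the ideal of P generated by v₁, v₂, ...), where γ ranges over exponent sequences of the correct degree that are strictly smaller than the sequence of v_m in the right lexicographic order. Then for every exponent sequence γ, η(v^γ) = λ·t^γ + Σ_{γ' < γ} λ'_{γ'} t^{γ'} + (terms in the ideal generated by the v_i), for some scalars with λ ≠ 0. -/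
/-- The integers localized at the prime `p`. -/
abbrev Zploc (p : ℕ) (hp : p.Prime) : Type :=
  @Localization.AtPrime ℤ _ (Ideal.span {(p : ℤ)})
    ((Ideal.span_singleton_prime (by exact_mod_cast hp.ne_zero)).mpr
      (Nat.prime_iff_prime_int.mp hp))

/-- Right lexicographic strict order on exponent sequences. -/
def rlex (a b : ℕ →₀ ℕ) : Prop :=
  ∃ j : ℕ, (∀ k : ℕ, j < k → a k = b k) ∧ a j < b j

/-- Weighted degree of an exponent sequence under `|v_{i+1}| = |t_{i+1}| = 2(p^{i+1}-1)`. -/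
def wdeg (p : ℕ) (γ : ℕ →₀ ℕ) : ℕ := γ.sum fun i a => a * (2 * (p ^ (i + 1) - 1))

/-- The monomial `t^γ` in `P = A[t₁, t₂, …]`, with the `v`'s indexed by
`Sum.inl` and the `t`'s by `Sum.inr` (index `i` playing the role of `i+1`). -/
noncomputable def tmon (p : ℕ) (hp : p.Prime) (γ : ℕ →₀ ℕ) :
    MvPolynomial (ℕ ⊕ ℕ) (Zploc p hp) :=
  MvPolynomial.monomial (γ.mapDomain Sum.inr) (1 : Zploc p hp)

/-- The ideal of `P` generated by the `v_i`. -/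
noncomputable def videal (p : ℕ) (hp : p.Prime) :
    Ideal (MvPolynomial (ℕ ⊕ ℕ) (Zploc p hp)) :=
  Ideal.span (Set.range fun i : ℕ =>
    (MvPolynomial.X (Sum.inl i) : MvPolynomial (ℕ ⊕ ℕ) (Zploc p hp)))

section Aux

theorem rlex_trans {a b c : ℕ →₀ ℕ} (h1 : rlex a b) (h2 : rlex b c) : rlex a c := by
  obtain ⟨j1, he1, hl1⟩ := h1
  obtain ⟨j2, he2, hl2⟩ := h2
  rcases lt_trichotomy j1 j2 with h | h | h
  · exact ⟨j2, fun k hk => (he1 k (h.trans hk)).trans (he2 k hk),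
      (he1 j2 h) ▸ hl2⟩
  · subst h
    exact ⟨j1, fun k hk => (he1 k hk).trans (he2 k hk), hl1.trans hl2⟩
  · exact ⟨j1, fun k hk => (he1 k hk).trans (he2 k (h.trans hk)),
      hl1.trans_le ((he2 j1 h).le)⟩

theorem rlex_add_right {a b : ℕ →₀ ℕ} (h : rlex a b) (c : ℕ →₀ ℕ) :
    rlex (a + c) (b + c) := by
  obtain ⟨j, he, hl⟩ := h
  exact ⟨j, fun k hk => by simp [Finsupp.add_apply, he k hk],
    by simpa [Finsupp.add_apply] using hl⟩

theorem rlex_add_left {a b : ℕ →₀ ℕ} (h : rlex a b) (c : ℕ →₀ ℕ) :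
    rlex (c + a) (c + b) := by
  rw [add_comm c a, add_comm c b]; exact rlex_add_right h c

theorem tmon_mul (p : ℕ) (hp : p.Prime) (a b : ℕ →₀ ℕ) :
    tmon p hp a * tmon p hp b = tmon p hp (a + b) := by
  simp [tmon, MvPolynomial.monomial_mul, Finsupp.mapDomain_add]

/-- Span of `rlex`-smaller `t`-monomials. -/
noncomputable def tspan (p : ℕ) (hp : p.Prime) (γ : ℕ →₀ ℕ) :
    Submodule (Zploc p hp) (MvPolynomial (ℕ ⊕ ℕ) (Zploc p hp)) :=
  Submodule.span (Zploc p hp) (tmon p hp '' {δ | rlex δ γ})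

theorem tspan_mono (p : ℕ) (hp : p.Prime) {a b : ℕ →₀ ℕ} (h : rlex a b) :
    tspan p hp a ≤ tspan p hp b :=
  Submodule.span_mono (Set.image_mono (fun _ hd => rlex_trans hd h))

theorem tmon_mem_tspan (p : ℕ) (hp : p.Prime) {a b : ℕ →₀ ℕ} (h : rlex a b) :
    tmon p hp a ∈ tspan p hp b :=
  Submodule.subset_span ⟨a, h, rfl⟩

theorem tmon_mul_tspan (p : ℕ) (hp : p.Prime) (a : ℕ →₀ ℕ) {b : ℕ →₀ ℕ}
    {x : MvPolynomial (ℕ ⊕ ℕ) (Zploc p hp)} (hx : x ∈ tspan p hp b) :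
    tmon p hp a * x ∈ tspan p hp (a + b) := by
  have : tspan p hp b ≤ Submodule.comap (LinearMap.mulLeft (Zploc p hp) (tmon p hp a))
      (tspan p hp (a + b)) := by
    rw [tspan, Submodule.span_le]
    rintro _ ⟨d, hd, rfl⟩
    rw [SetLike.mem_coe, Submodule.mem_comap, LinearMap.mulLeft_apply, tmon_mul]
    exact tmon_mem_tspan p hp (rlex_add_left hd a)
  exact this hx

theorem tspan_mul_tmon (p : ℕ) (hp : p.Prime) {a : ℕ →₀ ℕ} (b : ℕ →₀ ℕ)
    {x : MvPolynomial (ℕ ⊕ ℕ) (Zploc p hp)} (hx : x ∈ tspan p hp a) :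
    x * tmon p hp b ∈ tspan p hp (a + b) := by
  rw [mul_comm, add_comm]
  exact tmon_mul_tspan p hp b hx

theorem tspan_mul_tspan (p : ℕ) (hp : p.Prime) {a b : ℕ →₀ ℕ}
    {x y : MvPolynomial (ℕ ⊕ ℕ) (Zploc p hp)} (hx : x ∈ tspan p hp a)
    (hy : y ∈ tspan p hp b) : x * y ∈ tspan p hp (a + b) := by
  have : tspan p hp a ≤ Submodule.comap (LinearMap.mulRight (Zploc p hp) y)
      (tspan p hp (a + b)) := by
    rw [tspan, Submodule.span_le]
    rintro _ ⟨d, hd, rfl⟩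
    rw [SetLike.mem_coe, Submodule.mem_comap, LinearMap.mulRight_apply]
    exact tspan_mono p hp (rlex_add_right hd b) (tmon_mul_tspan p hp d hy)
  exact this hx

theorem p_ne_zero_zploc (p : ℕ) (hp : p.Prime) : (p : Zploc p hp) ≠ 0 := by
  haveI : (Ideal.span {(p : ℤ)}).IsPrime :=
    (Ideal.span_singleton_prime (by exact_mod_cast hp.ne_zero)).mpr
      (Nat.prime_iff_prime_int.mp hp)
  have hinj : Function.Injective (algebraMap ℤ (Zploc p hp)) :=
    IsLocalization.injective _ (Ideal.span {(p : ℤ)}).primeCompl_le_nonZeroDivisors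
  intro h
  have h2 : algebraMap ℤ (Zploc p hp) (p : ℤ) = algebraMap ℤ (Zploc p hp) 0 := by
    simpa using h
  exact (by exact_mod_cast hp.ne_zero : (p : ℤ) ≠ 0) (hinj h2)

end Aux

/-- If a ring homomorphism `η : ℤ_(p)[v₁,v₂,…] → ℤ_(p)[v₁,v₂,…][t₁,t₂,…]`
sends each `v_m` to `p·t_m` plus a linear combination of monomials `t^γ` of
the correct degree that are strictly `rlex`-smaller than the exponent
sequence of `v_m`, plus a term of the ideal generated by the `v_i`, then for
every exponent sequence `γ`, `η(v^γ) = λ·t^γ + Σ_{γ' < γ} λ'_{γ'} t^{γ'} +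
(terms in the ideal generated by the `v_i`)` with `λ ≠ 0`. -/


theorem eta_monomial_leading_term (p : ℕ) (hp : p.Prime)
    (η : MvPolynomial ℕ (Zploc p hp) →+* MvPolynomial (ℕ ⊕ ℕ) (Zploc p hp))
    (hη : ∀ m : ℕ, ∃ (lam : (ℕ →₀ ℕ) →₀ Zploc p hp)
        (w : MvPolynomial (ℕ ⊕ ℕ) (Zploc p hp)),
      w ∈ videal p hp ∧
      (∀ γ ∈ lam.support, rlex γ (Finsupp.single m 1) ∧
        wdeg p γ = 2 * (p ^ (m + 1) - 1)) ∧
      η (MvPolynomial.X m) =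
        (p : Zploc p hp) • tmon p hp (Finsupp.single m 1) +
          lam.sum (fun γ c => c • tmon p hp γ) + w) :
    ∀ γ : ℕ →₀ ℕ, ∃ (l : Zploc p hp) (lam' : (ℕ →₀ ℕ) →₀ Zploc p hp)
        (w : MvPolynomial (ℕ ⊕ ℕ) (Zploc p hp)),
      l ≠ 0 ∧ w ∈ videal p hp ∧
      (∀ γ' ∈ lam'.support, rlex γ' γ) ∧
      η (MvPolynomial.monomial γ (1 : Zploc p hp)) =
        l • tmon p hp γ + lam'.sum (fun γ' c => c • tmon p hp γ') + w := by
  classical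
  haveI : (Ideal.span {(p : ℤ)}).IsPrime :=
    (Ideal.span_singleton_prime (by exact_mod_cast hp.ne_zero)).mpr
      (Nat.prime_iff_prime_int.mp hp)
  -- key statement with span instead of finsupp
  have key : ∀ γ : ℕ →₀ ℕ, ∃ l : Zploc p hp, l ≠ 0 ∧
      ∃ s ∈ tspan p hp γ, ∃ w ∈ videal p hp,
        η (MvPolynomial.monomial γ (1 : Zploc p hp)) = l • tmon p hp γ + s + w := by
    have key0 : ∃ l : Zploc p hp, l ≠ 0 ∧
        ∃ s ∈ tspan p hp 0, ∃ w ∈ videal p hp,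
          η (MvPolynomial.monomial 0 (1 : Zploc p hp)) = l • tmon p hp 0 + s + w := by
      refine ⟨1, one_ne_zero, 0, Submodule.zero_mem _, 0, Ideal.zero_mem _, ?_⟩
      have h1 : (MvPolynomial.monomial (0 : ℕ →₀ ℕ) (1 : Zploc p hp)) = 1 := by
        simp [MvPolynomial.monomial_zero']
      have h2 : tmon p hp 0 = 1 := by
        simp [tmon, MvPolynomial.monomial_zero']
      simp [h1, h2]
    have keymul : ∀ γ₁ γ₂ : ℕ →₀ ℕ,
        (∃ l : Zploc p hp, l ≠ 0 ∧ ∃ s ∈ tspan p hp γ₁, ∃ w ∈ videal p hp,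
          η (MvPolynomial.monomial γ₁ (1 : Zploc p hp)) = l • tmon p hp γ₁ + s + w) →
        (∃ l : Zploc p hp, l ≠ 0 ∧ ∃ s ∈ tspan p hp γ₂, ∃ w ∈ videal p hp,
          η (MvPolynomial.monomial γ₂ (1 : Zploc p hp)) = l • tmon p hp γ₂ + s + w) →
        ∃ l : Zploc p hp, l ≠ 0 ∧ ∃ s ∈ tspan p hp (γ₁ + γ₂), ∃ w ∈ videal p hp,
          η (MvPolynomial.monomial (γ₁ + γ₂) (1 : Zploc p hp)) =
            l • tmon p hp (γ₁ + γ₂) + s + w := by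
      rintro γ₁ γ₂ ⟨l₁, hl₁, s₁, hs₁, w₁, hw₁, he₁⟩ ⟨l₂, hl₂, s₂, hs₂, w₂, hw₂, he₂⟩
      refine ⟨l₁ * l₂, mul_ne_zero hl₁ hl₂,
        l₁ • (tmon p hp γ₁ * s₂) + l₂ • (s₁ * tmon p hp γ₂) + s₁ * s₂, ?_,
        (l₁ • tmon p hp γ₁ + s₁ + w₁) * w₂ + w₁ * (l₂ • tmon p hp γ₂ + s₂), ?_, ?_⟩
      · refine Submodule.add_mem _ (Submodule.add_mem _ ?_ ?_) ?_
        · exact Submodule.smul_mem _ _ (tmon_mul_tspan p hp γ₁ hs₂)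
        · exact Submodule.smul_mem _ _ (tspan_mul_tmon p hp γ₂ hs₁)
        · exact tspan_mul_tspan p hp hs₁ hs₂
      · exact Ideal.add_mem _ (Ideal.mul_mem_left _ _ hw₂) (Ideal.mul_mem_right _ _ hw₁)
      · have hm : (MvPolynomial.monomial (γ₁ + γ₂) (1 : Zploc p hp)) =
            MvPolynomial.monomial γ₁ (1 : Zploc p hp) *
              MvPolynomial.monomial γ₂ (1 : Zploc p hp) := by
          rw [MvPolynomial.monomial_mul, one_mul]
        rw [hm, map_mul, he₁, he₂, ← tmon_mul]
        simp only [MvPolynomial.smul_eq_C_mul, map_mul]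
        ring
    have keysingle1 : ∀ m : ℕ,
        ∃ l : Zploc p hp, l ≠ 0 ∧ ∃ s ∈ tspan p hp (Finsupp.single m 1), ∃ w ∈ videal p hp,
          η (MvPolynomial.monomial (Finsupp.single m 1) (1 : Zploc p hp)) =
            l • tmon p hp (Finsupp.single m 1) + s + w := by
      intro m
      obtain ⟨lam, w, hw, hlam, heq⟩ := hη m
      refine ⟨(p : Zploc p hp), p_ne_zero_zploc p hp,
        lam.sum (fun γ c => c • tmon p hp γ), ?_, w, hw, ?_⟩
      · refine Submodule.sum_mem _ fun γ hγ => ?_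
        exact Submodule.smul_mem _ _ (tmon_mem_tspan p hp (hlam γ hγ).1)
      · have hx : (MvPolynomial.monomial (Finsupp.single m 1) (1 : Zploc p hp)) =
            MvPolynomial.X m := rfl
        rw [hx, heq]
    have keysingle : ∀ m n : ℕ,
        ∃ l : Zploc p hp, l ≠ 0 ∧ ∃ s ∈ tspan p hp (Finsupp.single m n), ∃ w ∈ videal p hp,
          η (MvPolynomial.monomial (Finsupp.single m n) (1 : Zploc p hp)) =
            l • tmon p hp (Finsupp.single m n) + s + w := by
      intro m n
      induction n with
      | zero => simpa using key0
      | succ k ih =>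
        have h : Finsupp.single m (k + 1) = Finsupp.single m k + Finsupp.single m 1 := by
          rw [← Finsupp.single_add]
        rw [h]
        exact keymul _ _ ih (keysingle1 m)
    intro γ
    induction γ using Finsupp.induction with
    | zero => exact key0
    | single_add a b f _ _ ih => exact keymul _ _ (keysingle a b) ih
  intro γ
  obtain ⟨l, hl, s, hs, w, hw, heq⟩ := key γ
  rw [tspan] at hs
  obtain ⟨lam', hsupp, hrep⟩ := (Finsupp.mem_span_image_iff_linearCombination _).mp hs
  rw [Finsupp.mem_supported] at hsupp
  refine ⟨l, lam', w, hl, hw, fun γ' hγ' => hsupp hγ', ?_⟩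
  rw [heq, ← hrep, Finsupp.linearCombination_apply]
end
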